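/- Lemma 5.5 (2-adic valuation of binomial coefficients with odd lower index): Let k be an odd natural number and n a natural number with 1 ≤ k ≤ n, and write v = v₂(n) for the 2-adic valuation of n. Then v₂(n) = v₂(binom(n, k)) if and only if one of the following holds: (1) n is odd and every binary digit of n is at least the corresponding binary digit of k (i.e. for all i, if bit i of k is 1 then bit i of n is 1); or (2) n is even, for every i > v the i-th binary digit of n is at least the i-th binary digit of k, and the v-th binary digit of k is 0. -/

import Mathlib

theorem odd_choose_iff : ∀ m j : ℕ,
    (Odd (Nat.choose m j) ↔ ∀ i, j.testBit i = true → m.testBit i = true) := by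
  intro m
  induction m using Nat.strong_induction_on with
  | _ m IH =>
    intro j
    rcases Nat.eq_zero_or_pos m with rfl | hm
    · simp only [Nat.zero_testBit]
      constructor
      · rintro h i hi
        rcases Nat.eq_zero_or_pos j with rfl | hj
        · simp at hi
        · rw [Nat.choose_eq_zero_of_lt hj] at h
          exact absurd h (by simp [Nat.odd_iff])
      · intro h
        have : j = 0 := Nat.eq_of_testBit_eq (fun i => by
          simp only [Nat.zero_testBit]
          by_contra hc
          exact absurd (h i (by simpa using hc)) (by simp))
        simp [this]
    · haveI : Fact (Nat.Prime 2) := ⟨Nat.prime_two⟩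
      have hmod := Choose.choose_modEq_choose_mod_mul_choose_div_nat (p := 2) (n := m) (k := j)
      have h1 : Odd (Nat.choose m j) ↔
          Odd (Nat.choose (m % 2) (j % 2)) ∧ Odd (Nat.choose (m / 2) (j / 2)) := by
        rw [Nat.odd_iff, Nat.odd_iff, Nat.odd_iff, hmod, Nat.mul_mod]
        rcases Nat.mod_two_eq_zero_or_one (Nat.choose (m % 2) (j % 2)) with h | h <;>
          rcases Nat.mod_two_eq_zero_or_one (Nat.choose (m / 2) (j / 2)) with h' | h' <;>
          simp [h, h']
      have h2 : Odd (Nat.choose (m % 2) (j % 2)) ↔ (j.testBit 0 = true → m.testBit 0 = true) := by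
        rcases Nat.mod_two_eq_zero_or_one m with h | h <;>
          rcases Nat.mod_two_eq_zero_or_one j with h' | h' <;>
          simp [h, h', Nat.testBit_zero, Nat.odd_iff]
      have h3 := IH (m / 2) (Nat.div_lt_self hm (by norm_num)) (j / 2)
      rw [h1, h2, h3]
      constructor
      · rintro ⟨h0, hs⟩ i
        cases i with
        | zero => exact h0
        | succ i =>
          rw [Nat.testBit_succ, Nat.testBit_succ]
          exact hs i
      · intro h
        refine ⟨h 0, fun i => ?_⟩
        rw [← Nat.testBit_succ, ← Nat.testBit_succ]
        exact h (i + 1)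

theorem testBit_sub_one_of (v : ℕ) : ∀ b i : ℕ,
    Nat.testBit (2 ^ v * (2 * b + 1) - 1) i =
      (if i < v then true else if i = v then false
       else Nat.testBit (2 ^ v * (2 * b + 1)) i) := by
  induction v with
  | zero =>
    intro b i
    simp only [pow_zero, one_mul, Nat.add_sub_cancel]
    cases i with
    | zero => simp [Nat.testBit_zero, Nat.mul_mod_right]
    | succ i =>
      have h1 : (2 * b) / 2 = b := by omega
      have h2 : (2 * b + 1) / 2 = b := by omega
      simp [Nat.testBit_succ, h1, h2]
  | succ v ih =>
    intro b i
    have hx : 2 ^ (v + 1) * (2 * b + 1) = 2 * (2 ^ v * (2 * b + 1)) := by ring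
    have hy : 1 ≤ 2 ^ v * (2 * b + 1) := Nat.one_le_iff_ne_zero.mpr (by positivity)
    cases i with
    | zero =>
      have : (2 ^ (v + 1) * (2 * b + 1) - 1) % 2 = 1 := by
        rw [hx]; omega
      simp [Nat.testBit_zero, this]
    | succ i =>
      have hd : (2 ^ (v + 1) * (2 * b + 1) - 1) / 2 = 2 ^ v * (2 * b + 1) - 1 := by
        rw [hx]; omega
      have hd2 : (2 ^ (v + 1) * (2 * b + 1)) / 2 = 2 ^ v * (2 * b + 1) := by
        rw [hx]; omega
      rw [Nat.testBit_succ, hd, ih b i, Nat.testBit_succ, hd2]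
      by_cases h1 : i < v
      · simp [h1, Nat.succ_lt_succ h1]
      · by_cases h2 : i = v <;> simp [h1, h2]

theorem valuation_choose_odd_lower (k n : ℕ) (hk : Odd k) (hk1 : 1 ≤ k)
    (hkn : k ≤ n) :
    padicValNat 2 n = padicValNat 2 (Nat.choose n k) ↔
      ((Odd n ∧ ∀ i : ℕ, Nat.testBit k i = true → Nat.testBit n i = true) ∨
       (Even n ∧
        (∀ i : ℕ, padicValNat 2 n < i →
          Nat.testBit k i = true → Nat.testBit n i = true) ∧
        Nat.testBit k (padicValNat 2 n) = false)) := by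
  haveI : Fact (Nat.Prime 2) := ⟨Nat.prime_two⟩
  have hn1 : 1 ≤ n := le_trans hk1 hkn
  have hn0 : n ≠ 0 := by omega
  have hk0 : k ≠ 0 := by omega
  set v := padicValNat 2 n with hv
  -- Step 1: the valuation identity
  have hid : n * Nat.choose (n - 1) (k - 1) = Nat.choose n k * k := by
    have := Nat.add_one_mul_choose_eq (n - 1) (k - 1)
    rwa [Nat.sub_add_cancel hk1, Nat.sub_add_cancel hn1] at this
  have hc0 : Nat.choose (n - 1) (k - 1) ≠ 0 :=
    (Nat.choose_pos (by omega : k - 1 ≤ n - 1)).ne'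
  have hC0 : Nat.choose n k ≠ 0 := (Nat.choose_pos hkn).ne'
  have hvk : padicValNat 2 k = 0 :=
    padicValNat.eq_zero_of_not_dvd (by have := Nat.odd_iff.mp hk; omega)
  have hval : v + padicValNat 2 (Nat.choose (n - 1) (k - 1)) =
      padicValNat 2 (Nat.choose n k) := by
    have h1 := padicValNat.mul (p := 2) hn0 hc0
    have h2 := padicValNat.mul (p := 2) hC0 hk0
    rw [hid] at h1
    rw [hvk] at h2
    omega
  have hstep : (v = padicValNat 2 (Nat.choose n k)) ↔
      Odd (Nat.choose (n - 1) (k - 1)) := by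
    have hz : padicValNat 2 (Nat.choose (n - 1) (k - 1)) = 0 ↔
        ¬ 2 ∣ Nat.choose (n - 1) (k - 1) := by
      rw [padicValNat.eq_zero_iff]
      simp [hc0]
    rw [Nat.odd_iff, ← Nat.two_dvd_ne_zero, ← hz]
    omega
  rw [hstep, odd_choose_iff]
  -- Step 2: bit descriptions
  obtain ⟨bk, hbk⟩ := hk
  have hkk : k = 2 ^ 0 * (2 * bk + 1) := by omega
  have hkbit : ∀ i, Nat.testBit (k - 1) i =
      (if i = 0 then false else Nat.testBit k i) := by
    intro i
    rw [hkk, testBit_sub_one_of 0 bk i]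
    simp
  have hnfac : 2 ^ v * (n / 2 ^ v) = n := by
    rw [hv, ← Nat.factorization_def n Nat.prime_two]
    exact Nat.ordProj_mul_ordCompl_eq_self n 2
  have hmodd : ¬ 2 ∣ (n / 2 ^ v) := by
    rw [hv, ← Nat.factorization_def n Nat.prime_two]
    exact Nat.not_dvd_ordCompl Nat.prime_two hn0
  obtain ⟨bn, hbn⟩ : ∃ b, n / 2 ^ v = 2 * b + 1 := ⟨(n / 2 ^ v) / 2, by omega⟩
  have hnn : n = 2 ^ v * (2 * bn + 1) := by rw [← hnfac, hbn]
  have hnbit : ∀ i, Nat.testBit (n - 1) i =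
      (if i < v then true else if i = v then false else Nat.testBit n i) := by
    intro i
    rw [hnn, testBit_sub_one_of v bn i]
  rcases Nat.even_or_odd n with hne | hno
  · -- n even
    have hv1 : 1 ≤ v := one_le_padicValNat_of_dvd (by omega) hne.two_dvd
    constructor
    · intro H
      refine Or.inr ⟨hne, fun i hiv hkib => ?_, ?_⟩
      · have := H i
        rw [hkbit, hnbit] at this
        simp only [if_neg (by omega : ¬ i = 0)] at this
        have := this hkib
        rw [if_neg (by omega : ¬ i < v), if_neg (by omega : ¬ i = v)] at this
        exact this
      · by_contra hc
        have hc' : Nat.testBit k v = true := by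
          cases h : Nat.testBit k v
          · exact absurd h hc
          · rfl
        have := H v
        rw [hkbit, hnbit] at this
        simp only [if_neg (by omega : ¬ v = 0), lt_irrefl, if_false, if_pos rfl,
          if_true] at this
        exact absurd (this hc') (by simp)
    · rintro (⟨hno', _⟩ | ⟨_, Hgt, Hv⟩)
      · exact absurd hno' (by simpa using hne)
      · intro i
        rw [hkbit, hnbit]
        rcases eq_or_ne i 0 with rfl | hi0
        · simp
        · simp only [if_neg hi0]
          rcases lt_trichotomy i v with h | h | h
          · simp [h]
          · subst h
            rw [Hv]
            simp
          · rw [if_neg (by omega), if_neg (by omega)]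
            exact Hgt i h
  · -- n odd
    have hv0 : v = 0 := padicValNat.eq_zero_of_not_dvd
      (by have := Nat.odd_iff.mp hno; omega)
    have hnb0 : Nat.testBit n 0 = true := by
      rw [Nat.testBit_zero]
      simp [Nat.odd_iff.mp hno]
    constructor
    · intro H
      refine Or.inl ⟨hno, fun i hkib => ?_⟩
      rcases eq_or_ne i 0 with rfl | hi0
      · exact hnb0
      · have := H i
        rw [hkbit, hnbit] at this
        simp only [if_neg hi0] at this
        have := this hkib
        rw [if_neg (by omega : ¬ i < v), if_neg (by omega : ¬ i = v)] at this
        exact this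
    · rintro (⟨_, Hall⟩ | ⟨hne', _⟩)
      · intro i
        rw [hkbit, hnbit]
        rcases eq_or_ne i 0 with rfl | hi0
        · simp
        · simp only [if_neg hi0]
          rw [if_neg (by omega : ¬ i < v), if_neg (by omega : ¬ i = v)]
          exact Hall i
      · exact absurd hne' (by simpa using hno)
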